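/- Let N ≥ 1. There exists a constant C > 0 such that for every t > 0 and all n, k ∈ ℤ^N with n ≠ k, the inequality |G_{t,N}(n) − G_{t,N}(k)| ≤ C · |n − k| · t^{−1/2 − N/2} holds. -/

import Mathlib

/-- The modified Bessel function of the first kind of integer order `m`. -/
noncomputable def besselIZ (m : ℤ) (t : ℝ) : ℝ :=
  (1 / Real.pi) * ∫ θ in (0 : ℝ)..Real.pi, Real.exp (t * Real.cos θ) * Real.cos ((m : ℝ) * θ)

/-- The `N`-dimensional discrete heat kernel. -/
noncomputable def heatKernel (N : ℕ) (t : ℝ) (n : Fin N → ℤ) : ℝ :=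
  ∏ k, Real.exp (-2 * t) * besselIZ (n k) (2 * t)

/-- The ℓ¹ norm of a point of `ℤ^N`. -/
noncomputable def znorm {N : ℕ} (n : Fin N → ℤ) : ℝ := ∑ i, |(n i : ℝ)|

open Real


lemma abs_sin_nat_mul_le (k : ℕ) (x : ℝ) : |Real.sin (k * x)| ≤ k * |Real.sin x| := by
  induction k with
  | zero => simp
  | succ k ih =>
    have h1 : Real.sin ((k + 1 : ℕ) * x) = Real.sin (k * x) * Real.cos x
        + Real.cos (k * x) * Real.sin x := by
      push_cast; rw [add_mul, one_mul, Real.sin_add]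
    rw [h1]
    have h2 := abs_cos_le_one x
    have h3 := abs_cos_le_one ((k : ℝ) * x)
    have h4 := abs_nonneg (Real.sin ((k:ℝ) * x))
    have h5 := abs_nonneg (Real.sin x)
    calc |Real.sin (↑k * x) * Real.cos x + Real.cos (↑k * x) * Real.sin x|
        ≤ |Real.sin (↑k * x) * Real.cos x| + |Real.cos (↑k * x) * Real.sin x| := abs_add_le _ _
      _ ≤ k * |Real.sin x| + |Real.sin x| := by
          rw [abs_mul, abs_mul]
          have : |Real.sin (↑k * x)| * |Real.cos x| ≤ k * |Real.sin x| := by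
            nlinarith
          nlinarith
      _ = (k + 1 : ℕ) * |Real.sin x| := by push_cast; ring

lemma abs_sin_int_mul_le (d : ℤ) (x : ℝ) : |Real.sin (d * x)| ≤ |(d : ℝ)| * |Real.sin x| := by
  rcases le_or_gt 0 d with h | h
  · lift d to ℕ using h
    simpa using abs_sin_nat_mul_le d x
  · have : ((-d).toNat : ℝ) = -(d : ℝ) := by
      have h0 : ((-d).toNat : ℤ) = -d := Int.toNat_of_nonneg (by omega)
      exact_mod_cast congrArg (Int.cast : ℤ → ℝ) h0
    have h2 := abs_sin_nat_mul_le (-d).toNat x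
    rw [this] at h2
    rw [show -(d:ℝ) * x = -(d * x) by ring, Real.sin_neg, abs_neg] at h2
    calc |Real.sin (d * x)| ≤ -(d:ℝ) * |Real.sin x| := h2
      _ = |(d:ℝ)| * |Real.sin x| := by
          rw [abs_of_neg (show (d:ℝ) < 0 by exact_mod_cast h)]

lemma cos_eq (θ : ℝ) : Real.cos θ = 1 - 2 * Real.sin (θ/2) ^ 2 := by
  have h := Real.cos_two_mul (θ/2)
  rw [show 2 * (θ/2) = θ by ring] at h
  nlinarith [Real.sin_sq_add_cos_sq (θ/2)]

lemma my_integral_arctan (c : ℝ) (hc : 0 < c) :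
    ∫ θ in (0:ℝ)..π, (1 + (c*θ)^2)⁻¹ = c⁻¹ * Real.arctan (c * π) := by
  have hder : ∀ θ ∈ Set.uIcc (0:ℝ) π, HasDerivAt (fun x => c⁻¹ * Real.arctan (c*x))
      ((1 + (c*θ)^2)⁻¹) θ := by
    intro θ _
    have h1 : HasDerivAt (fun x : ℝ => c * x) c θ := by
      simpa using (hasDerivAt_id θ).const_mul c
    have h2 := (Real.hasDerivAt_arctan' (c*θ)).comp θ h1
    have h3 := h2.const_mul c⁻¹
    refine h3.congr_deriv ?_
    field_simp
  have hint : IntervalIntegrable (fun θ : ℝ => (1 + (c*θ)^2)⁻¹) MeasureTheory.volume 0 π := by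
    apply Continuous.intervalIntegrable
    exact (continuous_const.add ((continuous_const.mul continuous_id).pow 2)).inv₀
      (fun x => (by positivity : (0:ℝ) < 1 + (c*x)^2).ne')
  rw [intervalIntegral.integral_eq_sub_of_hasDerivAt hder hint]
  simp [Real.arctan_zero]

lemma besselIZ_abs_le (m : ℤ) (s : ℝ) (hs : 0 < s) :
    |besselIZ m s| ≤ 2 * Real.exp s / Real.sqrt s := by
  set c : ℝ := Real.sqrt (2*s) / π with hc
  have hπ := Real.pi_pos
  have hcpos : 0 < c := by positivity
  have hbound : ∀ θ ∈ Set.Icc (0:ℝ) π,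
      |Real.exp (s * Real.cos θ) * Real.cos ((m:ℝ) * θ)| ≤ Real.exp s * (1 + (c*θ)^2)⁻¹ := by
    intro θ hθ
    obtain ⟨hθ0, hθπ⟩ := hθ
    have h1 : |Real.exp (s * Real.cos θ) * Real.cos ((m:ℝ)*θ)| ≤ Real.exp (s * Real.cos θ) := by
      rw [abs_mul, Real.abs_exp]
      exact mul_le_of_le_one_right (Real.exp_pos _).le (abs_cos_le_one _)
    refine h1.trans ?_
    have h2 : Real.exp (s * Real.cos θ) = Real.exp s * Real.exp (-(2*s*Real.sin (θ/2)^2)) := by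
      rw [← Real.exp_add]; rw [cos_eq θ]; ring_nf
    rw [h2]
    have hsin : θ / π ≤ Real.sin (θ/2) := by
      have := Real.mul_le_sin (x := θ/2) (by linarith) (by linarith)
      calc θ/π = 2/π * (θ/2) := by field_simp
        _ ≤ Real.sin (θ/2) := this
    have hsq : (c*θ)^2 ≤ 2*s*Real.sin (θ/2)^2 := by
      have h3 : Real.sqrt (2*s) ^ 2 = 2*s := Real.sq_sqrt (by linarith)
      have h4 : (θ/π)^2 ≤ Real.sin (θ/2)^2 := by
        have h5 : 0 ≤ θ/π := by positivity
        nlinarith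
      have : (c*θ)^2 = 2*s * (θ/π)^2 := by
        rw [hc]; field_simp
        rw [Real.sq_sqrt (by linarith)]
        try ring
      nlinarith
    have hexp : Real.exp (-(2*s*Real.sin (θ/2)^2)) ≤ (1 + (c*θ)^2)⁻¹ := by
      have h6 : Real.exp (-(2*s*Real.sin (θ/2)^2)) ≤ (1 + 2*s*Real.sin (θ/2)^2)⁻¹ := by
        rw [Real.exp_neg]
        apply inv_anti₀ (by positivity)
        have := Real.add_one_le_exp (2*s*Real.sin (θ/2)^2)
        linarith
      refine h6.trans ?_
      apply inv_anti₀ (by positivity)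
      linarith
    exact mul_le_mul_of_nonneg_left hexp (Real.exp_pos s).le
  have hint1 : IntervalIntegrable (fun θ => |Real.exp (s * Real.cos θ) * Real.cos ((m:ℝ)*θ)|)
      MeasureTheory.volume 0 π := by
    apply Continuous.intervalIntegrable; fun_prop
  have hint2 : IntervalIntegrable (fun θ : ℝ => Real.exp s * (1 + (c*θ)^2)⁻¹)
      MeasureTheory.volume 0 π := by
    apply Continuous.intervalIntegrable
    exact continuous_const.mul ((continuous_const.add
      ((continuous_const.mul continuous_id).pow 2)).inv₀ (fun x => (by positivity : (0:ℝ) < 1 + (c*x)^2).ne'))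
  have key : |∫ θ in (0:ℝ)..π, Real.exp (s * Real.cos θ) * Real.cos ((m:ℝ)*θ)|
      ≤ Real.exp s * (c⁻¹ * Real.arctan (c*π)) := by
    calc |∫ θ in (0:ℝ)..π, Real.exp (s * Real.cos θ) * Real.cos ((m:ℝ)*θ)|
        ≤ ∫ θ in (0:ℝ)..π, |Real.exp (s * Real.cos θ) * Real.cos ((m:ℝ)*θ)| :=
          intervalIntegral.abs_integral_le_integral_abs hπ.le
      _ ≤ ∫ θ in (0:ℝ)..π, Real.exp s * (1 + (c*θ)^2)⁻¹ :=
          intervalIntegral.integral_mono_on hπ.le hint1 hint2 hbound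
      _ = Real.exp s * ∫ θ in (0:ℝ)..π, (1 + (c*θ)^2)⁻¹ := by
          rw [← intervalIntegral.integral_const_mul]
      _ = Real.exp s * (c⁻¹ * Real.arctan (c*π)) := by rw [my_integral_arctan c hcpos]
  rw [besselIZ, abs_mul]
  have h7 : |1/π| = 1/π := abs_of_pos (by positivity)
  rw [h7]
  have harct : Real.arctan (c*π) ≤ π/2 := (Real.arctan_lt_pi_div_two _).le
  have hss : (0:ℝ) < Real.sqrt s := Real.sqrt_pos.2 hs
  have hc2 : c⁻¹ = π / Real.sqrt (2*s) := by rw [hc]; field_simp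
  have hfin : 1/π * (Real.exp s * (c⁻¹ * Real.arctan (c*π))) ≤ 2 * Real.exp s / Real.sqrt s := by
    rw [hc2]
    have h8 : Real.sqrt (2*s) = Real.sqrt 2 * Real.sqrt s := Real.sqrt_mul (by norm_num) s
    have h9 : (1:ℝ) ≤ Real.sqrt 2 := by
      nlinarith [Real.sq_sqrt (show (0:ℝ) ≤ 2 by norm_num), Real.sqrt_nonneg 2]
    have h11 : 0 ≤ Real.arctan (c*π) := by
      have := Real.arctan_strictMono.monotone (show (0:ℝ) ≤ c*π by positivity)
      simpa using this
    rw [h8]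
    have heq : 1/π * (Real.exp s * (π / (Real.sqrt 2 * Real.sqrt s) * Real.arctan (c*π)))
        = Real.exp s * Real.arctan (c*π) / (Real.sqrt 2 * Real.sqrt s) := by
      field_simp
    rw [heq, div_le_div_iff₀ (by positivity) hss]
    have hpi4 := Real.pi_le_four
    have hex := (Real.exp_pos s).le
    have hA2 : Real.arctan (c*π) ≤ 2 := by linarith
    calc Real.exp s * Real.arctan (c*π) * Real.sqrt s
        ≤ Real.exp s * 2 * Real.sqrt s :=
          mul_le_mul_of_nonneg_right (mul_le_mul_of_nonneg_left hA2 hex) hss.le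
      _ ≤ 2 * Real.exp s * (Real.sqrt 2 * Real.sqrt s) := by
          nlinarith [mul_nonneg (mul_nonneg hex hss.le) (sub_nonneg.2 h9)]
  calc 1/π * |∫ θ in (0:ℝ)..π, Real.exp (s * Real.cos θ) * Real.cos ((m:ℝ)*θ)|
      ≤ 1/π * (Real.exp s * (c⁻¹ * Real.arctan (c*π))) := by
        apply mul_le_mul_of_nonneg_left key (by positivity)
    _ ≤ 2 * Real.exp s / Real.sqrt s := hfin

lemma sin_half_le_sin {θ : ℝ} (h0 : 0 ≤ θ) (h1 : θ ≤ π/2) : Real.sin (θ/2) ≤ Real.sin θ := by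
  have hs : Real.sin θ = 2 * Real.sin (θ/2) * Real.cos (θ/2) := by
    rw [show θ = 2*(θ/2) by ring, Real.sin_two_mul]; ring_nf
  have hπ := Real.pi_pos
  have hc : Real.cos (π/3) ≤ Real.cos (θ/2) :=
    Real.cos_le_cos_of_nonneg_of_le_pi (by linarith) (by linarith) (by linarith)
  rw [Real.cos_pi_div_three] at hc
  have hsn : 0 ≤ Real.sin (θ/2) := Real.sin_nonneg_of_nonneg_of_le_pi (by linarith) (by linarith)
  nlinarith

lemma integral_exp_cos_sin_half_le (s : ℝ) (hs : 0 < s) :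
    ∫ θ in (0:ℝ)..π, Real.exp (s * Real.cos θ) * Real.sin (θ/2) ≤ 3 * Real.exp s / s := by
  have hπ := Real.pi_pos
  have hcont : Continuous fun θ : ℝ => Real.exp (s * Real.cos θ) * Real.sin (θ/2) := by fun_prop
  have hI1 : IntervalIntegrable (fun θ : ℝ => Real.exp (s * Real.cos θ) * Real.sin (θ/2))
      MeasureTheory.volume 0 (π/2) := hcont.intervalIntegrable _ _
  have hI2 : IntervalIntegrable (fun θ : ℝ => Real.exp (s * Real.cos θ) * Real.sin (θ/2))
      MeasureTheory.volume (π/2) π := hcont.intervalIntegrable _ _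
  rw [← intervalIntegral.integral_add_adjacent_intervals hI1 hI2]
  -- first piece
  have hfirst : ∫ θ in (0:ℝ)..(π/2), Real.exp (s * Real.cos θ) * Real.sin (θ/2)
      ≤ Real.exp s / s := by
    have hmono : ∫ θ in (0:ℝ)..(π/2), Real.exp (s * Real.cos θ) * Real.sin (θ/2)
        ≤ ∫ θ in (0:ℝ)..(π/2), Real.exp (s * Real.cos θ) * Real.sin θ := by
      apply intervalIntegral.integral_mono_on (by linarith) (hcont.intervalIntegrable _ _)
        ((by fun_prop : Continuous fun θ : ℝ =>
          Real.exp (s * Real.cos θ) * Real.sin θ).intervalIntegrable _ _)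
      intro θ hθ
      exact mul_le_mul_of_nonneg_left (sin_half_le_sin hθ.1 hθ.2) (Real.exp_pos _).le
    refine hmono.trans ?_
    have hder : ∀ θ ∈ Set.uIcc (0:ℝ) (π/2),
        HasDerivAt (fun x => -(Real.exp (s * Real.cos x) / s))
          (Real.exp (s * Real.cos θ) * Real.sin θ) θ := by
      intro θ _
      have h1 : HasDerivAt (fun x : ℝ => s * Real.cos x) (s * (-Real.sin θ)) θ :=
        (Real.hasDerivAt_cos θ).const_mul s
      have h2 := (h1.exp.div_const s).neg
      refine h2.congr_deriv ?_
      field_simp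
    rw [intervalIntegral.integral_eq_sub_of_hasDerivAt hder
      (Continuous.intervalIntegrable (by fun_prop) _ _)]
    rw [Real.cos_pi_div_two, Real.cos_zero]
    simp only [mul_zero, mul_one, Real.exp_zero]
    have heq : -(1/s) - -(Real.exp s / s) = (Real.exp s - 1)/s := by ring
    rw [heq]
    gcongr
    linarith
  -- second piece
  have hsecond : ∫ θ in (π/2:ℝ)..π, Real.exp (s * Real.cos θ) * Real.sin (θ/2) ≤ π/2 := by
    have hone : ∫ θ in (π/2:ℝ)..π, (1:ℝ) = π/2 := by simp; ring
    have hmono2 : ∫ θ in (π/2:ℝ)..π, Real.exp (s * Real.cos θ) * Real.sin (θ/2)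
        ≤ ∫ θ in (π/2:ℝ)..π, (1:ℝ) := by
      apply intervalIntegral.integral_mono_on (by linarith) (hcont.intervalIntegrable _ _)
        (intervalIntegrable_const)
      intro θ hθ
      have hcos : Real.cos θ ≤ 0 :=
        Real.cos_nonpos_of_pi_div_two_le_of_le hθ.1 (by linarith [hθ.2])
      have he : Real.exp (s * Real.cos θ) ≤ 1 := by
        rw [← Real.exp_zero]
        exact Real.exp_le_exp.2 (mul_nonpos_of_nonneg_of_nonpos hs.le hcos)
      have hsin : Real.sin (θ/2) ≤ 1 := Real.sin_le_one _
      have hsinn : 0 ≤ Real.sin (θ/2) :=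
        Real.sin_nonneg_of_nonneg_of_le_pi (by linarith [hθ.1]) (by linarith [hθ.2])
      nlinarith [Real.exp_pos (s * Real.cos θ)]
    linarith [hmono2, hone.le, hone.ge]
  have hlast : π/2 * s ≤ 2 * Real.exp s := by
    nlinarith [Real.add_one_le_exp s, Real.pi_le_four]
  have : Real.exp s / s + π/2 ≤ 3 * Real.exp s / s := by
    rw [div_add' _ _ _ hs.ne', div_le_div_iff₀ hs hs]
    nlinarith [mul_le_mul_of_nonneg_right hlast hs.le, Real.exp_pos s, mul_pos hs hs]
  linarith

lemma besselIZ_sub_le (m m' : ℤ) (s : ℝ) (hs : 0 < s) :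
    |besselIZ m s - besselIZ m' s| ≤ 2 * |((m - m' : ℤ) : ℝ)| * Real.exp s / s := by
  have hπ := Real.pi_pos
  set d : ℝ := |((m - m' : ℤ) : ℝ)| with hd
  have hdnn : 0 ≤ d := abs_nonneg _
  have hIc : ∀ mm : ℤ, IntervalIntegrable
      (fun θ : ℝ => Real.exp (s * Real.cos θ) * Real.cos ((mm:ℝ) * θ))
      MeasureTheory.volume 0 π := fun mm => Continuous.intervalIntegrable (by fun_prop) _ _
  have hdiff : besselIZ m s - besselIZ m' s = (1/π) *
      ∫ θ in (0:ℝ)..π, Real.exp (s * Real.cos θ) *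
        (Real.cos ((m:ℝ) * θ) - Real.cos ((m':ℝ) * θ)) := by
    rw [besselIZ, besselIZ, ← mul_sub, ← intervalIntegral.integral_sub (hIc m) (hIc m')]
    simp only [mul_sub]
  rw [hdiff]
  have hbound : ∀ θ ∈ Set.Icc (0:ℝ) π,
      |Real.exp (s * Real.cos θ) * (Real.cos ((m:ℝ) * θ) - Real.cos ((m':ℝ) * θ))|
        ≤ (2*d) * (Real.exp (s * Real.cos θ) * Real.sin (θ/2)) := by
    intro θ hθ
    have hsin : 0 ≤ Real.sin (θ/2) :=
      Real.sin_nonneg_of_nonneg_of_le_pi (by linarith [hθ.1]) (by linarith [hθ.2])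
    have hcc : Real.cos ((m:ℝ) * θ) - Real.cos ((m':ℝ) * θ) =
        -2 * Real.sin (((m:ℝ)*θ + (m':ℝ)*θ)/2) * Real.sin (((m:ℝ)*θ - (m':ℝ)*θ)/2) :=
      Real.cos_sub_cos _ _
    have harg : ((m:ℝ)*θ - (m':ℝ)*θ)/2 = ((m - m' : ℤ) : ℝ) * (θ/2) := by push_cast; ring
    have h1 : |Real.cos ((m:ℝ) * θ) - Real.cos ((m':ℝ) * θ)| ≤ 2 * d * Real.sin (θ/2) := by
      rw [hcc, harg]
      have h2 := abs_sin_int_mul_le (m - m') (θ/2)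
      have h3 : |Real.sin (θ/2)| = Real.sin (θ/2) := abs_of_nonneg hsin
      rw [h3] at h2
      have h4 : |Real.sin (((m:ℝ)*θ + (m':ℝ)*θ)/2)| ≤ 1 := Real.abs_sin_le_one _
      have h5 : 0 ≤ |Real.sin (((m - m' : ℤ):ℝ) * (θ/2))| := abs_nonneg _
      rw [abs_mul, abs_mul, show |(-2:ℝ)| = 2 by norm_num]
      nlinarith [mul_le_mul h4 h2 h5 (by norm_num : (0:ℝ) ≤ 1)]
    rw [abs_mul, Real.abs_exp]
    calc Real.exp (s * Real.cos θ) * |Real.cos ((m:ℝ) * θ) - Real.cos ((m':ℝ) * θ)|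
        ≤ Real.exp (s * Real.cos θ) * (2 * d * Real.sin (θ/2)) :=
          mul_le_mul_of_nonneg_left h1 (Real.exp_pos _).le
      _ = (2*d) * (Real.exp (s * Real.cos θ) * Real.sin (θ/2)) := by ring
  have hkey : |∫ θ in (0:ℝ)..π, Real.exp (s * Real.cos θ) *
      (Real.cos ((m:ℝ) * θ) - Real.cos ((m':ℝ) * θ))|
      ≤ (2*d) * (3 * Real.exp s / s) := by
    calc |∫ θ in (0:ℝ)..π, Real.exp (s * Real.cos θ) *
        (Real.cos ((m:ℝ) * θ) - Real.cos ((m':ℝ) * θ))|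
        ≤ ∫ θ in (0:ℝ)..π, |Real.exp (s * Real.cos θ) *
          (Real.cos ((m:ℝ) * θ) - Real.cos ((m':ℝ) * θ))| :=
          intervalIntegral.abs_integral_le_integral_abs hπ.le
      _ ≤ ∫ θ in (0:ℝ)..π, (2*d) * (Real.exp (s * Real.cos θ) * Real.sin (θ/2)) :=
          intervalIntegral.integral_mono_on hπ.le (Continuous.intervalIntegrable (by fun_prop) _ _)
            (Continuous.intervalIntegrable (by fun_prop) _ _) hbound
      _ = (2*d) * ∫ θ in (0:ℝ)..π, Real.exp (s * Real.cos θ) * Real.sin (θ/2) := by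
          rw [← intervalIntegral.integral_const_mul]
      _ ≤ (2*d) * (3 * Real.exp s / s) := by
          apply mul_le_mul_of_nonneg_left (integral_exp_cos_sin_half_le s hs) (by positivity)
  rw [abs_mul, abs_of_pos (show (0:ℝ) < 1/π by positivity)]
  calc 1/π * |∫ θ in (0:ℝ)..π, Real.exp (s * Real.cos θ) *
      (Real.cos ((m:ℝ) * θ) - Real.cos ((m':ℝ) * θ))|
      ≤ 1/π * ((2*d) * (3 * Real.exp s / s)) :=
        mul_le_mul_of_nonneg_left hkey (by positivity)
    _ ≤ 1/3 * ((2*d) * (3 * Real.exp s / s)) := by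
        apply mul_le_mul_of_nonneg_right _ (by positivity)
        rw [div_le_div_iff₀ hπ (by norm_num)]
        nlinarith [Real.pi_gt_three]
    _ = 2 * d * Real.exp s / s := by field_simp

lemma prod_sub_prod_abs_le {ι : Type*} [DecidableEq ι] (f g : ι → ℝ) (B : ℝ) (hB : 0 ≤ B)
    (hf : ∀ i, |f i| ≤ B) (hg : ∀ i, |g i| ≤ B) (s : Finset ι) :
    |∏ i ∈ s, f i - ∏ i ∈ s, g i| ≤ (∑ i ∈ s, |f i - g i|) * B ^ (s.card - 1) := by
  induction s using Finset.induction_on with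
  | empty => simp
  | @insert a s' ha ih =>
    rw [Finset.prod_insert ha, Finset.prod_insert ha, Finset.sum_insert ha,
      Finset.card_insert_of_notMem ha]
    have hP : |∏ i ∈ s', f i| ≤ B ^ s'.card := by
      rw [Finset.abs_prod]
      calc ∏ i ∈ s', |f i| ≤ ∏ i ∈ s', B :=
            Finset.prod_le_prod (fun i _ => abs_nonneg _) (fun i _ => hf i)
        _ = B ^ s'.card := Finset.prod_const B
    have key : f a * ∏ i ∈ s', f i - g a * ∏ i ∈ s', g i
        = (f a - g a) * ∏ i ∈ s', f i + g a * (∏ i ∈ s', f i - ∏ i ∈ s', g i) := by ring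
    rcases Finset.eq_empty_or_nonempty s' with rfl | hne
    · simp
    · have hc : s'.card - 1 + 1 = s'.card := Nat.succ_pred_eq_of_pos (Finset.card_pos.2 hne)
      have hcard : s'.card + 1 - 1 = s'.card := by omega
      rw [hcard]
      calc |f a * ∏ i ∈ s', f i - g a * ∏ i ∈ s', g i|
          ≤ |f a - g a| * |∏ i ∈ s', f i| + |g a| * |∏ i ∈ s', f i - ∏ i ∈ s', g i| := by
            rw [key]
            refine (abs_add_le _ _).trans ?_
            rw [abs_mul, abs_mul]
        _ ≤ |f a - g a| * B ^ s'.card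
            + B * ((∑ i ∈ s', |f i - g i|) * B ^ (s'.card - 1)) :=
            add_le_add (mul_le_mul_of_nonneg_left hP (abs_nonneg _))
              (mul_le_mul (hg a) ih (abs_nonneg _) hB)
        _ = (|f a - g a| + ∑ i ∈ s', |f i - g i|) * B ^ s'.card := by
            rw [mul_comm B, mul_assoc, ← pow_succ, hc]; ring

/-- Lipschitz-type estimate for the discrete heat kernel. -/
theorem stmt9 (N : ℕ) (hN : 1 ≤ N) :
    ∃ C : ℝ, 0 < C ∧ ∀ t : ℝ, 0 < t → ∀ n k : Fin N → ℤ, n ≠ k →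
      |heatKernel N t n - heatKernel N t k| ≤
        C * znorm (n - k) * t ^ (-(1 / 2 : ℝ) - (N : ℝ) / 2) := by
  refine ⟨2 ^ N, by positivity, ?_⟩
  intro t ht n k hnk
  have ht2 : 0 < 2 * t := by linarith
  have hst : 0 < Real.sqrt t := Real.sqrt_pos.2 ht
  have hexp2t : Real.exp (-2 * t) = (Real.exp (2 * t))⁻¹ := by
    rw [show (-2 : ℝ) * t = -(2 * t) by ring, Real.exp_neg]
  -- bound on each factor
  have hB : ∀ m : ℤ, |Real.exp (-2 * t) * besselIZ m (2 * t)| ≤ 2 / Real.sqrt t := by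
    intro m
    rw [abs_mul, Real.abs_exp]
    calc Real.exp (-2 * t) * |besselIZ m (2 * t)|
        ≤ Real.exp (-2 * t) * (2 * Real.exp (2 * t) / Real.sqrt (2 * t)) :=
          mul_le_mul_of_nonneg_left (besselIZ_abs_le m (2 * t) ht2) (Real.exp_pos _).le
      _ = 2 / Real.sqrt (2 * t) := by
          rw [hexp2t]
          field_simp
      _ ≤ 2 / Real.sqrt t := by
          have h1 : Real.sqrt t ≤ Real.sqrt (2 * t) := Real.sqrt_le_sqrt (by linarith)
          exact div_le_div_of_nonneg_left (by norm_num) hst h1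
  -- bound on each difference
  have hD : ∀ i : Fin N, |Real.exp (-2 * t) * besselIZ (n i) (2 * t)
      - Real.exp (-2 * t) * besselIZ (k i) (2 * t)| ≤ |((n i - k i : ℤ) : ℝ)| / t := by
    intro i
    rw [← mul_sub, abs_mul, Real.abs_exp]
    calc Real.exp (-2 * t) * |besselIZ (n i) (2 * t) - besselIZ (k i) (2 * t)|
        ≤ Real.exp (-2 * t) * (2 * |((n i - k i : ℤ) : ℝ)| * Real.exp (2 * t) / (2 * t)) :=
          mul_le_mul_of_nonneg_left (besselIZ_sub_le (n i) (k i) (2 * t) ht2)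
            (Real.exp_pos _).le
      _ = |((n i - k i : ℤ) : ℝ)| / t := by
          rw [hexp2t]
          field_simp
          try ring
  have main := prod_sub_prod_abs_le (fun i => Real.exp (-2 * t) * besselIZ (n i) (2 * t))
    (fun i => Real.exp (-2 * t) * besselIZ (k i) (2 * t)) (2 / Real.sqrt t)
    (by positivity) (fun i => hB (n i)) (fun i => hB (k i)) Finset.univ
  rw [Finset.card_univ, Fintype.card_fin] at main
  have hHK : heatKernel N t n - heatKernel N t k =
      (∏ i, Real.exp (-2 * t) * besselIZ (n i) (2 * t))
      - ∏ i, Real.exp (-2 * t) * besselIZ (k i) (2 * t) := rfl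
  rw [hHK]
  have hsum : ∑ i, |Real.exp (-2 * t) * besselIZ (n i) (2 * t)
      - Real.exp (-2 * t) * besselIZ (k i) (2 * t)| ≤ znorm (n - k) / t := by
    have hz : znorm (n - k) / t = ∑ i, |((n i - k i : ℤ) : ℝ)| / t := by
      rw [znorm, Finset.sum_div]
      refine Finset.sum_congr rfl fun i _ => ?_
      norm_num [Pi.sub_apply]
    rw [hz]
    exact Finset.sum_le_sum (fun i _ => hD i)
  have hznn : 0 ≤ znorm (n - k) := Finset.sum_nonneg (fun i _ => abs_nonneg _)
  have hpow : (0:ℝ) ≤ (2 / Real.sqrt t) ^ (N - 1) := by positivity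
  have step : |(∏ i, Real.exp (-2 * t) * besselIZ (n i) (2 * t))
      - ∏ i, Real.exp (-2 * t) * besselIZ (k i) (2 * t)|
      ≤ (znorm (n - k) / t) * (2 / Real.sqrt t) ^ (N - 1) :=
    main.trans (mul_le_mul_of_nonneg_right hsum hpow)
  refine step.trans ?_
  -- now pure rpow algebra
  have hc : ((N - 1 : ℕ) : ℝ) = (N : ℝ) - 1 := by
    rw [Nat.cast_sub hN]; norm_num
  have hsqrtpow : (Real.sqrt t) ^ (N - 1) = t ^ (((N : ℝ) - 1) / 2) := by
    rw [← Real.rpow_natCast (Real.sqrt t) (N - 1), Real.sqrt_eq_rpow,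
      ← Real.rpow_mul ht.le, hc]
    ring_nf
  have hE : t ^ (-(1 / 2 : ℝ) - (N : ℝ) / 2) = (t * (Real.sqrt t) ^ (N - 1))⁻¹ := by
    rw [show -(1 / 2 : ℝ) - (N : ℝ) / 2 = -((1 / 2 : ℝ) + (N : ℝ) / 2) by ring,
      Real.rpow_neg ht.le]
    congr 1
    rw [hsqrtpow, show (1 / 2 : ℝ) + (N : ℝ) / 2 = 1 + ((N : ℝ) - 1) / 2 by ring,
      Real.rpow_add ht, Real.rpow_one]
  have heq : (znorm (n - k) / t) * (2 / Real.sqrt t) ^ (N - 1)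
      = 2 ^ (N - 1) * znorm (n - k) * t ^ (-(1 / 2 : ℝ) - (N : ℝ) / 2) := by
    rw [div_pow, hE]
    have hsp : (0:ℝ) < (Real.sqrt t) ^ (N - 1) := by positivity
    field_simp
  rw [heq]
  have hple : (2:ℝ) ^ (N - 1) ≤ 2 ^ N :=
    pow_le_pow_right₀ (by norm_num) (Nat.sub_le N 1)
  have hrnn : (0:ℝ) ≤ t ^ (-(1 / 2 : ℝ) - (N : ℝ) / 2) := Real.rpow_nonneg ht.le _
  exact mul_le_mul_of_nonneg_right (mul_le_mul_of_nonneg_right hple hznn) hrnn
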